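/- For every integer k ≥ 1 and every integer n ≥ k+7 there exist triangulations S and T of size n such that every geodesic S = S_0, S_1, …, S_m = T from S to T in the associahedron graph satisfies conflicts(S_1, T) = conflicts(S_0, T) + k; that is, every geodesic from S to T begins with an edge flip that increases the number of conflicts with T by exactly k. -/

import Mathlib

/-- Two chords `e = {e.1, e.2}` and `f = {f.1, f.2}` (each written with first
coordinate smaller) of a convex polygon cross. -/
def Crosses (e f : ℕ × ℕ) : Prop :=
  (e.1 < f.1 ∧ f.1 < e.2 ∧ e.2 < f.2) ∨ (f.1 < e.1 ∧ e.1 < f.2 ∧ f.2 < e.2)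

instance (e f : ℕ × ℕ) : Decidable (Crosses e f) := by
  unfold Crosses; exact inferInstance

/-- `e` is a diagonal of the convex `(n+2)`-gon with vertices `0, 1, …, n+1`
(in order), i.e. a chord joining two non-adjacent vertices, recorded with
smaller endpoint first. -/
def IsDiagonal (n : ℕ) (e : ℕ × ℕ) : Prop :=
  e.1 < e.2 ∧ e.2 ≤ n + 1 ∧ e.1 + 1 < e.2 ∧ ¬(e.1 = 0 ∧ e.2 = n + 1)

/-- A triangulation of size `n`: a set of `n - 1` pairwise non-crossing
diagonals of the `(n+2)`-gon (dividing it into `n` triangles). -/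
def IsTriangulation (n : ℕ) (S : Finset (ℕ × ℕ)) : Prop :=
  S.card = n - 1 ∧ (∀ e ∈ S, IsDiagonal n e) ∧ ∀ e ∈ S, ∀ f ∈ S, ¬ Crosses e f

/-- The number of conflicts between `S` and `T`: the number of pairs
`(s, t)` with `s ∈ S`, `t ∈ T` such that `s` and `t` cross. -/
def conflicts (S T : Finset (ℕ × ℕ)) : ℕ :=
  ((S ×ˢ T).filter fun p => Crosses p.1 p.2).card

/-- `S` and `T` are triangulations of size `n` differing by a single edge
flip: exactly one diagonal of `S` is replaced by one other diagonal. -/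
def FlipAdj (n : ℕ) (S T : Finset (ℕ × ℕ)) : Prop :=
  IsTriangulation n S ∧ IsTriangulation n T ∧ (S \ T).card = 1 ∧ (T \ S).card = 1

/-- `f 0, f 1, …, f k` is a path `S = f 0, …, f k = T` in the associahedron
graph of size `n` (consecutive triangulations differ by an edge flip). -/
def IsFlipPath (n k : ℕ) (f : ℕ → Finset (ℕ × ℕ)) (S T : Finset (ℕ × ℕ)) : Prop :=
  f 0 = S ∧ f k = T ∧ ∀ i < k, FlipAdj n (f i) (f (i + 1))

/-- The flip distance `d(S,T)`: the least length of a path from `S` to `T`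
in the associahedron graph of size `n`. -/
noncomputable def flipDist (n : ℕ) (S T : Finset (ℕ × ℕ)) : ℕ :=
  sInf {k | ∃ f, IsFlipPath n k f S T}

/-- A geodesic from `S` to `T`: a path in the associahedron graph whose
length `k` equals the distance `d(S,T)`. -/
def IsGeodesic (n k : ℕ) (f : ℕ → Finset (ℕ × ℕ)) (S T : Finset (ℕ × ℕ)) : Prop :=
  IsFlipPath n k f S T ∧ k = flipDist n S T

/-- An edge `e ∈ S`, `e ∉ T` is one-off with respect to `T` if flipping `e`
in `S` directly produces an edge of `T \ S`. -/
def OneOff (n : ℕ) (S T : Finset (ℕ × ℕ)) (e : ℕ × ℕ) : Prop :=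
  e ∈ S ∧ e ∉ T ∧ ∃ e' ∈ T, e' ∉ S ∧ IsTriangulation n (insert e' (S.erase e))

namespace St2
def fan (a b : ℕ) : Finset (ℕ × ℕ) := (Finset.Icc a b).image fun j => (0, j)
def col (c a b : ℕ) : Finset (ℕ × ℕ) := (Finset.Icc a b).image fun j => (j, c)

lemma mem_fan {a b p q : ℕ} : (p, q) ∈ fan a b ↔ p = 0 ∧ a ≤ q ∧ q ≤ b := by
  simp [fan, Prod.ext_iff, eq_comm, and_comm]

lemma mem_col {c a b p q : ℕ} : (p, q) ∈ col c a b ↔ a ≤ p ∧ p ≤ b ∧ q = c := by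
  simp [col, Prod.ext_iff]; aesop

lemma card_fan (a b : ℕ) : (fan a b).card = b + 1 - a := by
  rw [fan, Finset.card_image_of_injective _ (by intro x y h; simpa using h), Nat.card_Icc]

lemma card_col (c a b : ℕ) : (col c a b).card = b + 1 - a := by
  rw [col, Finset.card_image_of_injective _ (by intro x y h; simpa using h), Nat.card_Icc]

def Sd (k n : ℕ) : Finset (ℕ × ℕ) := fan 2 (k+6) ∪ {(k+6, k+8)} ∪ fan (k+8) n
def Td (k n : ℕ) : Finset (ℕ × ℕ) := col (k+8) 1 (k+3) ∪ col (k+7) (k+3) (k+5) ∪ fan (k+8) n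
/-- intermediate triangulations, phase 1 (k+3 ≤ j ≤ k+6) -/
def Vd (k n j : ℕ) : Finset (ℕ × ℕ) := fan 2 j ∪ col (k+7) j (k+5) ∪ {(0, k+7)} ∪ fan (k+8) n
/-- intermediate triangulations, phase 2 (1 ≤ j ≤ k+3) -/
def Wd (k n j : ℕ) : Finset (ℕ × ℕ) :=
  fan 2 j ∪ col (k+7) (k+3) (k+5) ∪ col (k+8) j (k+3) ∪ fan (k+8) n

lemma mem_Sd {k n p q : ℕ} : (p, q) ∈ Sd k n ↔
    (p = 0 ∧ 2 ≤ q ∧ q ≤ k+6) ∨ (p = k+6 ∧ q = k+8) ∨ (p = 0 ∧ k+8 ≤ q ∧ q ≤ n) := by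
  simp [Sd, mem_fan, Prod.ext_iff, or_assoc]; tauto

lemma mem_Td {k n p q : ℕ} : (p, q) ∈ Td k n ↔
    (1 ≤ p ∧ p ≤ k+3 ∧ q = k+8) ∨ (k+3 ≤ p ∧ p ≤ k+5 ∧ q = k+7) ∨
    (p = 0 ∧ k+8 ≤ q ∧ q ≤ n) := by
  simp [Td, mem_fan, mem_col, or_assoc]

lemma mem_Vd {k n j p q : ℕ} : (p, q) ∈ Vd k n j ↔
    (p = 0 ∧ 2 ≤ q ∧ q ≤ j) ∨ (j ≤ p ∧ p ≤ k+5 ∧ q = k+7) ∨ (p = 0 ∧ q = k+7) ∨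
    (p = 0 ∧ k+8 ≤ q ∧ q ≤ n) := by
  simp [Vd, mem_fan, mem_col, Prod.ext_iff, or_assoc]; tauto

lemma mem_Wd {k n j p q : ℕ} : (p, q) ∈ Wd k n j ↔
    (p = 0 ∧ 2 ≤ q ∧ q ≤ j) ∨ (k+3 ≤ p ∧ p ≤ k+5 ∧ q = k+7) ∨
    (j ≤ p ∧ p ≤ k+3 ∧ q = k+8) ∨ (p = 0 ∧ k+8 ≤ q ∧ q ≤ n) := by
  simp [Wd, mem_fan, mem_col, or_assoc]


section
variable {k n : ℕ} (hn : k + 7 ≤ n)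
include hn

lemma isTri_Sd : IsTriangulation n (Sd k n) := by
  have d1 : Disjoint (fan 2 (k+6)) ({((k+6:ℕ), k+8)} : Finset (ℕ × ℕ)) := by
    rw [Finset.disjoint_left]; rintro ⟨p,q⟩ h h'
    rw [mem_fan] at h; rw [Finset.mem_singleton, Prod.mk.injEq] at h'; omega
  have d2 : Disjoint (fan 2 (k+6) ∪ {((k+6:ℕ), k+8)}) (fan (k+8) n) := by
    rw [Finset.disjoint_left]; rintro ⟨p,q⟩ h h'
    simp only [Finset.mem_union, mem_fan, Finset.mem_singleton, Prod.mk.injEq] at h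
    rw [mem_fan] at h'; omega
  refine ⟨?_, ?_, ?_⟩
  · rw [Sd, Finset.card_union_of_disjoint d2, Finset.card_union_of_disjoint d1,
      card_fan, card_fan, Finset.card_singleton]; omega
  · rintro ⟨p,q⟩ h; rw [mem_Sd] at h; unfold IsDiagonal; simp only; omega
  · rintro ⟨p,q⟩ h ⟨p',q'⟩ h'; rw [mem_Sd] at h h'; unfold Crosses; simp only; omega

lemma isTri_Td : IsTriangulation n (Td k n) := by
  have d1 : Disjoint (col (k+8) 1 (k+3)) (col (k+7) (k+3) (k+5)) := by
    rw [Finset.disjoint_left]; rintro ⟨p,q⟩ h h'; rw [mem_col] at h h'; omega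
  have d2 : Disjoint (col (k+8) 1 (k+3) ∪ col (k+7) (k+3) (k+5)) (fan (k+8) n) := by
    rw [Finset.disjoint_left]; rintro ⟨p,q⟩ h h'
    simp only [Finset.mem_union, mem_col] at h; rw [mem_fan] at h'; omega
  refine ⟨?_, ?_, ?_⟩
  · rw [Td, Finset.card_union_of_disjoint d2, Finset.card_union_of_disjoint d1,
      card_fan, card_col, card_col]; omega
  · rintro ⟨p,q⟩ h; rw [mem_Td] at h; unfold IsDiagonal; simp only; omega
  · rintro ⟨p,q⟩ h ⟨p',q'⟩ h'; rw [mem_Td] at h h'; unfold Crosses; simp only; omega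

lemma isTri_Vd {j : ℕ} (hj1 : k+3 ≤ j) (hj2 : j ≤ k+6) : IsTriangulation n (Vd k n j) := by
  have d1 : Disjoint (fan 2 j) (col (k+7) j (k+5)) := by
    rw [Finset.disjoint_left]; rintro ⟨p,q⟩ h h'; rw [mem_fan] at h; rw [mem_col] at h'; omega
  have d2 : Disjoint (fan 2 j ∪ col (k+7) j (k+5)) ({((0:ℕ), k+7)} : Finset (ℕ × ℕ)) := by
    rw [Finset.disjoint_left]; rintro ⟨p,q⟩ h h'
    simp only [Finset.mem_union, mem_fan, mem_col] at h
    rw [Finset.mem_singleton, Prod.mk.injEq] at h'; omega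
  have d3 : Disjoint (fan 2 j ∪ col (k+7) j (k+5) ∪ {((0:ℕ), k+7)}) (fan (k+8) n) := by
    rw [Finset.disjoint_left]; rintro ⟨p,q⟩ h h'
    simp only [Finset.mem_union, mem_fan, mem_col, Finset.mem_singleton, Prod.mk.injEq] at h
    rw [mem_fan] at h'; omega
  refine ⟨?_, ?_, ?_⟩
  · rw [Vd, Finset.card_union_of_disjoint d3, Finset.card_union_of_disjoint d2,
      Finset.card_union_of_disjoint d1, card_fan, card_fan, card_col, Finset.card_singleton]
    omega
  · rintro ⟨p,q⟩ h; rw [mem_Vd] at h; unfold IsDiagonal; simp only; omega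
  · rintro ⟨p,q⟩ h ⟨p',q'⟩ h'; rw [mem_Vd] at h h'; unfold Crosses; simp only; omega

lemma isTri_Wd {j : ℕ} (hj1 : 1 ≤ j) (hj2 : j ≤ k+3) : IsTriangulation n (Wd k n j) := by
  have d1 : Disjoint (fan 2 j) (col (k+7) (k+3) (k+5)) := by
    rw [Finset.disjoint_left]; rintro ⟨p,q⟩ h h'; rw [mem_fan] at h; rw [mem_col] at h'; omega
  have d2 : Disjoint (fan 2 j ∪ col (k+7) (k+3) (k+5)) (col (k+8) j (k+3)) := by
    rw [Finset.disjoint_left]; rintro ⟨p,q⟩ h h'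
    simp only [Finset.mem_union, mem_fan, mem_col] at h; rw [mem_col] at h'; omega
  have d3 : Disjoint (fan 2 j ∪ col (k+7) (k+3) (k+5) ∪ col (k+8) j (k+3)) (fan (k+8) n) := by
    rw [Finset.disjoint_left]; rintro ⟨p,q⟩ h h'
    simp only [Finset.mem_union, mem_fan, mem_col] at h; rw [mem_fan] at h'; omega
  refine ⟨?_, ?_, ?_⟩
  · rw [Wd, Finset.card_union_of_disjoint d3, Finset.card_union_of_disjoint d2,
      Finset.card_union_of_disjoint d1, card_fan, card_fan, card_col, card_col]
    omega
  · rintro ⟨p,q⟩ h; rw [mem_Wd] at h; unfold IsDiagonal; simp only; omega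
  · rintro ⟨p,q⟩ h ⟨p',q'⟩ h'; rw [mem_Wd] at h h'; unfold Crosses; simp only; omega
end

lemma Wd_one_eq_Td {k n : ℕ} : Wd k n 1 = Td k n := by
  ext ⟨p,q⟩; rw [mem_Wd, mem_Td]; omega

lemma flip_S_V {k n : ℕ} (hn : k + 7 ≤ n) : FlipAdj n (Sd k n) (Vd k n (k+6)) := by
  have h1 : Sd k n \ Vd k n (k+6) = {(k+6, k+8)} := by
    ext ⟨p,q⟩
    simp only [Finset.mem_sdiff, mem_Sd, mem_Vd, Finset.mem_singleton, Prod.mk.injEq]; omega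
  have h2 : Vd k n (k+6) \ Sd k n = {(0, k+7)} := by
    ext ⟨p,q⟩
    simp only [Finset.mem_sdiff, mem_Sd, mem_Vd, Finset.mem_singleton, Prod.mk.injEq]; omega
  exact ⟨isTri_Sd hn, isTri_Vd hn (by omega) (by omega),
    by rw [h1, Finset.card_singleton], by rw [h2, Finset.card_singleton]⟩

lemma flip_VV {k n : ℕ} (hn : k + 7 ≤ n) {j : ℕ} (hj1 : k+3 ≤ j) (hj2 : j ≤ k+5) :
    FlipAdj n (Vd k n (j+1)) (Vd k n j) := by
  have h1 : Vd k n (j+1) \ Vd k n j = {(0, j+1)} := by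
    ext ⟨p,q⟩
    simp only [Finset.mem_sdiff, mem_Vd, Finset.mem_singleton, Prod.mk.injEq]; omega
  have h2 : Vd k n j \ Vd k n (j+1) = {(j, k+7)} := by
    ext ⟨p,q⟩
    simp only [Finset.mem_sdiff, mem_Vd, Finset.mem_singleton, Prod.mk.injEq]; omega
  exact ⟨isTri_Vd hn (by omega) (by omega), isTri_Vd hn (by omega) (by omega),
    by rw [h1, Finset.card_singleton], by rw [h2, Finset.card_singleton]⟩

lemma flip_V_W {k n : ℕ} (hn : k + 7 ≤ n) : FlipAdj n (Vd k n (k+3)) (Wd k n (k+3)) := by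
  have h1 : Vd k n (k+3) \ Wd k n (k+3) = {(0, k+7)} := by
    ext ⟨p,q⟩
    simp only [Finset.mem_sdiff, mem_Vd, mem_Wd, Finset.mem_singleton, Prod.mk.injEq]; omega
  have h2 : Wd k n (k+3) \ Vd k n (k+3) = {(k+3, k+8)} := by
    ext ⟨p,q⟩
    simp only [Finset.mem_sdiff, mem_Vd, mem_Wd, Finset.mem_singleton, Prod.mk.injEq]; omega
  exact ⟨isTri_Vd hn (by omega) (by omega), isTri_Wd hn (by omega) (by omega),
    by rw [h1, Finset.card_singleton], by rw [h2, Finset.card_singleton]⟩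

lemma flip_WW {k n : ℕ} (hn : k + 7 ≤ n) {j : ℕ} (hj1 : 1 ≤ j) (hj2 : j ≤ k+2) :
    FlipAdj n (Wd k n (j+1)) (Wd k n j) := by
  have h1 : Wd k n (j+1) \ Wd k n j = {(0, j+1)} := by
    ext ⟨p,q⟩
    simp only [Finset.mem_sdiff, mem_Wd, Finset.mem_singleton, Prod.mk.injEq]; omega
  have h2 : Wd k n j \ Wd k n (j+1) = {(j, k+8)} := by
    ext ⟨p,q⟩
    simp only [Finset.mem_sdiff, mem_Wd, Finset.mem_singleton, Prod.mk.injEq]; omega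
  exact ⟨isTri_Wd hn (by omega) (by omega), isTri_Wd hn (by omega) (by omega),
    by rw [h1, Finset.card_singleton], by rw [h2, Finset.card_singleton]⟩

def gpath (k n : ℕ) : ℕ → Finset (ℕ × ℕ) := fun i =>
  if i = 0 then Sd k n else if i ≤ 4 then Vd k n (k+7-i) else Wd k n (k+8-i)

lemma gpath_isFlipPath {k n : ℕ} (hn : k + 7 ≤ n) :
    IsFlipPath n (k+7) (gpath k n) (Sd k n) (Td k n) := by
  refine ⟨by simp [gpath], ?_, ?_⟩
  · have h1 : ¬ (k+7 = 0) := by omega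
    have h2 : ¬ (k+7 ≤ 4) := by omega
    have h3 : k+8-(k+7) = 1 := by omega
    simp only [gpath, if_neg h1, if_neg h2, h3, Wd_one_eq_Td]
  · intro i hi
    rcases Nat.lt_or_ge i 1 with h | h
    · have hi0 : i = 0 := by omega
      subst hi0
      have e1 : gpath k n 0 = Sd k n := by simp [gpath]
      have e2 : gpath k n 1 = Vd k n (k+6) := by norm_num [gpath]
      rw [e1, e2]; exact flip_S_V hn
    · rcases Nat.lt_or_ge i 4 with h4 | h4
      · -- 1 ≤ i ≤ 3 : V (k+7-i) → V (k+6-i)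
        have e1 : gpath k n i = Vd k n ((k+6-i)+1) := by
          simp only [gpath, if_neg (by omega : ¬ i = 0), if_pos (by omega : i ≤ 4)]
          congr 1 <;> omega
        have e2 : gpath k n (i+1) = Vd k n (k+6-i) := by
          simp only [gpath, if_neg (by omega : ¬ i + 1 = 0), if_pos (by omega : i + 1 ≤ 4)]
          congr 1 <;> omega
        rw [e1, e2]; exact flip_VV hn (by omega) (by omega)
      · rcases Nat.lt_or_ge i 5 with h5 | h5
        · have hi4 : i = 4 := by omega
          subst hi4
          have e1 : gpath k n 4 = Vd k n (k+3) := by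
            simp only [gpath, if_neg (by omega : ¬ (4:ℕ) = 0), if_pos (by omega : (4:ℕ) ≤ 4)]
            congr 1 <;> omega
          have e2 : gpath k n 5 = Wd k n (k+3) := by
            simp only [gpath, if_neg (by omega : ¬ (5:ℕ) = 0), if_neg (by omega : ¬ (5:ℕ) ≤ 4)]
            congr 1 <;> omega
          rw [e1, e2]; exact flip_V_W hn
        · -- 5 ≤ i ≤ k+6 : W (k+8-i) → W (k+7-i)
          have e1 : gpath k n i = Wd k n ((k+7-i)+1) := by
            simp only [gpath, if_neg (by omega : ¬ i = 0), if_neg (by omega : ¬ i ≤ 4)]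
            congr 1 <;> omega
          have e2 : gpath k n (i+1) = Wd k n (k+7-i) := by
            simp only [gpath, if_neg (by omega : ¬ i + 1 = 0), if_neg (by omega : ¬ i + 1 ≤ 4)]
            congr 1 <;> omega
          rw [e1, e2]; exact flip_WW hn (by omega) (by omega)


lemma flip_decomp {n : ℕ} {U V : Finset (ℕ × ℕ)} (h : FlipAdj n U V) :
    ∃ s x, s ∈ U ∧ s ∉ V ∧ x ∈ V ∧ x ∉ U ∧ V = insert x (U.erase s) := by
  obtain ⟨s, hs⟩ := Finset.card_eq_one.1 h.2.2.1
  obtain ⟨x, hx⟩ := Finset.card_eq_one.1 h.2.2.2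
  have hsm : s ∈ U ∧ s ∉ V := by
    have : s ∈ U \ V := hs ▸ Finset.mem_singleton_self s
    exact ⟨(Finset.mem_sdiff.1 this).1, (Finset.mem_sdiff.1 this).2⟩
  have hxm : x ∈ V ∧ x ∉ U := by
    have : x ∈ V \ U := hx ▸ Finset.mem_singleton_self x
    exact ⟨(Finset.mem_sdiff.1 this).1, (Finset.mem_sdiff.1 this).2⟩
  refine ⟨s, x, hsm.1, hsm.2, hxm.1, hxm.2, ?_⟩
  ext a
  simp only [Finset.mem_insert, Finset.mem_erase]
  constructor
  · intro ha
    by_cases haU : a ∈ U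
    · exact Or.inr ⟨fun he => hsm.2 (he ▸ ha), haU⟩
    · have : a ∈ V \ U := Finset.mem_sdiff.2 ⟨ha, haU⟩
      exact Or.inl (Finset.mem_singleton.1 (hx ▸ this))
  · rintro (rfl | ⟨hne, haU⟩)
    · exact hxm.1
    · by_contra haV
      have : a ∈ U \ V := Finset.mem_sdiff.2 ⟨haU, haV⟩
      exact hne (Finset.mem_singleton.1 (hs ▸ this))

lemma path_tail {n m : ℕ} {f : ℕ → Finset (ℕ × ℕ)} {S T : Finset (ℕ × ℕ)}
    (h : IsFlipPath n m f S T) (i : ℕ) (hi : i ≤ m) :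
    IsFlipPath n (m - i) (fun j => f (i + j)) (f i) T := by
  refine ⟨rfl, ?_, ?_⟩
  · show f (i + (m - i)) = T
    rw [Nat.add_sub_cancel' hi]; exact h.2.1
  · intro j hj
    exact h.2.2 (i + j) (by omega)

lemma path_ge_sdiff {n : ℕ} {T : Finset (ℕ × ℕ)} :
    ∀ (m : ℕ) (f : ℕ → Finset (ℕ × ℕ)) (U : Finset (ℕ × ℕ)),
      IsFlipPath n m f U T → (U \ T).card ≤ m := by
  intro m
  induction m with
  | zero =>
    intro f U h
    have : U = T := by rw [← h.1, h.2.1]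
    simp [this]
  | succ m ih =>
    intro f U h
    have h0 : FlipAdj n U (f 1) := by
      have := h.2.2 0 (by omega); rwa [h.1] at this
    have htail : IsFlipPath n m (fun j => f (1 + j)) (f 1) T := by
      have := path_tail h 1 (by omega)
      simpa using this
    have h1 := ih _ _ htail
    obtain ⟨s, x, hsU, hsV, hxV, hxU, hV⟩ := flip_decomp h0
    have hsub : U \ T ⊆ insert s (f 1 \ T) := by
      intro a ha
      obtain ⟨haU, haT⟩ := Finset.mem_sdiff.1 ha
      by_cases has : a = s
      · exact has ▸ Finset.mem_insert_self _ _
      · exact Finset.mem_insert_of_mem (Finset.mem_sdiff.2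
          ⟨hV ▸ Finset.mem_insert_of_mem (Finset.mem_erase.2 ⟨has, haU⟩), haT⟩)
    calc (U \ T).card ≤ (insert s (f 1 \ T)).card := Finset.card_le_card hsub
      _ ≤ (f 1 \ T).card + 1 := Finset.card_insert_le _ _
      _ ≤ m + 1 := by omega

lemma strict_step {n : ℕ} {T U V : Finset (ℕ × ℕ)} (h : FlipAdj n U V)
    (hlt : (V \ T).card < (U \ T).card) :
    ∃ y r, y ∈ T ∧ y ∉ U ∧ r ∈ U ∧ V = insert y (U.erase r) ∧
      ∀ e ∈ U, e ≠ r → ¬ Crosses y e := by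
  obtain ⟨s, x, hsU, hsV, hxV, hxU, hV⟩ := flip_decomp h
  have hxT : x ∈ T := by
    by_contra hxT
    have hsub : insert x ((U \ T).erase s) ⊆ V \ T := by
      intro a ha
      rcases Finset.mem_insert.1 ha with rfl | ha
      · exact Finset.mem_sdiff.2 ⟨hxV, hxT⟩
      · obtain ⟨hne, ha'⟩ := Finset.mem_erase.1 ha
        obtain ⟨haU, haT⟩ := Finset.mem_sdiff.1 ha'
        exact Finset.mem_sdiff.2 ⟨hV ▸ Finset.mem_insert_of_mem (Finset.mem_erase.2 ⟨hne, haU⟩), haT⟩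
    have hc := Finset.card_le_card hsub
    have hxnot : x ∉ (U \ T).erase s :=
      fun hx' => hxU (Finset.mem_sdiff.1 (Finset.mem_of_mem_erase hx')).1
    rw [Finset.card_insert_of_notMem hxnot] at hc
    have hpred : (U \ T).card - 1 ≤ ((U \ T).erase s).card := Finset.pred_card_le_card_erase
    omega
  refine ⟨x, s, hxT, hxU, hsU, hV, ?_⟩
  intro e heU hene
  have heV : e ∈ V := hV ▸ Finset.mem_insert_of_mem (Finset.mem_erase.2 ⟨hene, heU⟩)
  exact h.2.1.2.2 x hxV e heV


lemma conflicts_sum (U T : Finset (ℕ × ℕ)) :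
    conflicts U T = ∑ e ∈ U, (T.filter fun t => Crosses e t).card := by
  rw [conflicts]
  rw [Finset.card_eq_sum_card_fiberwise
    (f := Prod.fst) (t := U)
    (fun p hp => (Finset.mem_product.1 (Finset.mem_filter.1 hp).1).1)]
  refine Finset.sum_congr rfl fun e he => ?_
  have himg : ((U ×ˢ T).filter (fun p => Crosses p.1 p.2)).filter (fun p => p.1 = e)
      = (T.filter fun t => Crosses e t).image (fun t => (e, t)) := by
    ext ⟨a, b⟩
    simp only [Finset.mem_filter, Finset.mem_product, Finset.mem_image, Prod.mk.injEq]
    constructor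
    · rintro ⟨⟨⟨haU, hbT⟩, hcr⟩, rfl⟩
      exact ⟨b, ⟨hbT, hcr⟩, rfl, rfl⟩
    · rintro ⟨t, ⟨htT, hcr⟩, rfl, rfl⟩
      exact ⟨⟨⟨he, htT⟩, hcr⟩, rfl⟩
  rw [himg, Finset.card_image_of_injective _ (fun a b hab => by simpa using hab)]

lemma conflicts_insert_erase {U T : Finset (ℕ × ℕ)} {s x : ℕ × ℕ}
    (hs : s ∈ U) (hx : x ∉ U) :
    conflicts (insert x (U.erase s)) T + (T.filter fun t => Crosses s t).card
      = conflicts U T + (T.filter fun t => Crosses x t).card := by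
  rw [conflicts_sum, conflicts_sum,
    Finset.sum_insert (fun h => hx (Finset.mem_of_mem_erase h)),
    ← Finset.add_sum_erase _ _ hs]
  ring


lemma cross_x {k n : ℕ} (hn : k + 7 ≤ n) :
    ((Td k n).filter fun t => Crosses (0, k+7) t).card = k + 3 := by
  have he : (Td k n).filter (fun t => Crosses (0, k+7) t) = col (k+8) 1 (k+3) := by
    ext ⟨p, q⟩
    rw [Finset.mem_filter]; simp only [mem_Td, mem_col, Crosses]
    omega
  rw [he, card_col]
  omega

lemma cross_s {k n : ℕ} (hn : k + 7 ≤ n) :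
    ((Td k n).filter fun t => Crosses (k+6, k+8) t).card = 3 := by
  have he : (Td k n).filter (fun t => Crosses (k+6, k+8) t) = col (k+7) (k+3) (k+5) := by
    ext ⟨p, q⟩
    rw [Finset.mem_filter]; simp only [mem_Td, mem_col, Crosses]
    omega
  rw [he, card_col]
  omega

lemma card_Sd_diff_Td {k n : ℕ} (hn : k + 7 ≤ n) :
    (Sd k n \ Td k n).card = k + 6 := by
  have he : Sd k n \ Td k n = fan 2 (k+6) ∪ {(k+6, k+8)} := by
    ext ⟨p, q⟩
    simp only [Finset.mem_sdiff, mem_Sd, mem_Td, Finset.mem_union, mem_fan,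
      Finset.mem_singleton, Prod.mk.injEq]
    omega
  rw [he, Finset.card_union_of_disjoint, card_fan, Finset.card_singleton]
  · omega
  · rw [Finset.disjoint_left]; rintro ⟨p,q⟩ h h'
    rw [mem_fan] at h; rw [Finset.mem_singleton, Prod.mk.injEq] at h'; omega

lemma CF1 {k n : ℕ} (hn : k + 7 ≤ n) {p q : ℕ}
    (hT : (p, q) ∈ Td k n) (hS : (p, q) ∉ Sd k n) :
    ∃ e1 e2, e1 ∈ Sd k n ∧ e2 ∈ Sd k n ∧ e1 ≠ e2 ∧ Crosses (p,q) e1 ∧ Crosses (p,q) e2 := by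
  rw [mem_Td] at hT; rw [mem_Sd] at hS
  rcases hT with ⟨h1, h2, h3⟩ | ⟨h1, h2, h3⟩ | hpad
  · exact ⟨(0, p+1), (0, p+2), by rw [mem_Sd]; omega, by rw [mem_Sd]; omega,
      by simp only [ne_eq, Prod.mk.injEq]; omega,
      by simp only [Crosses]; omega, by simp only [Crosses]; omega⟩
  · exact ⟨(0, p+1), (k+6, k+8), by rw [mem_Sd]; omega, by rw [mem_Sd]; omega,
      by simp only [ne_eq, Prod.mk.injEq]; omega,
      by simp only [Crosses]; omega, by simp only [Crosses]; omega⟩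
  · exact absurd (Or.inr (Or.inr hpad)) hS

lemma CF2 {k n : ℕ} (hn : k + 7 ≤ n) {p q : ℕ}
    (hT : (p, q) ∈ Td k n) (hS : (p, q) ∉ Sd k n) {a b : ℕ × ℕ}
    (h : ∀ e ∈ Sd k n, Crosses (p,q) e → e = a ∨ e = b) :
    p = k + 5 ∧ q = k + 7 := by
  obtain ⟨a1, a2⟩ := a; obtain ⟨b1, b2⟩ := b
  rw [mem_Td] at hT; rw [mem_Sd] at hS
  rcases hT with ⟨h1, h2, h3⟩ | ⟨h1, h2, h3⟩ | hpad
  · have c1 := h (0, p+1) (by rw [mem_Sd]; omega) (by simp only [Crosses]; omega)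
    have c2 := h (0, p+2) (by rw [mem_Sd]; omega) (by simp only [Crosses]; omega)
    have c3 := h (0, p+3) (by rw [mem_Sd]; omega) (by simp only [Crosses]; omega)
    simp only [Prod.mk.injEq] at c1 c2 c3
    omega
  · rcases Nat.lt_or_ge p (k+5) with hp | hp
    · have c1 := h (0, p+1) (by rw [mem_Sd]; omega) (by simp only [Crosses]; omega)
      have c2 := h (0, p+2) (by rw [mem_Sd]; omega) (by simp only [Crosses]; omega)
      have c3 := h (k+6, k+8) (by rw [mem_Sd]; omega) (by simp only [Crosses]; omega)
      simp only [Prod.mk.injEq] at c1 c2 c3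
      omega
    · omega
  · exact absurd (Or.inr (Or.inr hpad)) hS

lemma CF3 {k n : ℕ} (hn : k + 7 ≤ n) {p q : ℕ} (hd : IsDiagonal n (p, q))
    (hS : (p, q) ∉ Sd k n) (hT : (p, q) ∉ Td k n)
    (h : ∀ e ∈ Sd k n, e ≠ (k+6, k+8) → ¬ Crosses (p,q) e) :
    p = 0 ∧ q = k + 7 := by
  simp only [IsDiagonal] at hd
  rw [mem_Sd] at hS; rw [mem_Td] at hT
  rcases Nat.eq_zero_or_pos p with rfl | hp
  · omega
  · exfalso
    by_cases h1 : p + 1 ≤ k + 6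
    · exact h (0, p+1) (by rw [mem_Sd]; omega)
        (by simp only [ne_eq, Prod.mk.injEq]; omega) (by simp only [Crosses]; omega)
    · by_cases h2 : p = k + 6
      · by_cases h3 : q = k + 8
        · exact hS (by omega)
        · exact h (0, k+8) (by rw [mem_Sd]; omega)
            (by simp only [ne_eq, Prod.mk.injEq]; omega) (by simp only [Crosses]; omega)
      · exact h (0, p+1) (by rw [mem_Sd]; omega)
          (by simp only [ne_eq, Prod.mk.injEq]; omega) (by simp only [Crosses]; omega)

lemma CF4 {k n : ℕ} (hn : k + 7 ≤ n) {p q : ℕ} (hd : IsDiagonal n (p, q))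
    (hS : (p, q) ∉ Sd k n) (hT : (p, q) ∉ Td k n)
    (h : ∀ e ∈ Sd k n, e ≠ (0, k+6) → ¬ Crosses (p,q) e) :
    p = k + 5 ∧ q = k + 8 := by
  simp only [IsDiagonal] at hd
  rw [mem_Sd] at hS; rw [mem_Td] at hT
  rcases Nat.eq_zero_or_pos p with rfl | hp
  · exfalso
    have hq : q = k + 7 := by omega
    exact h (k+6, k+8) (by rw [mem_Sd]; omega)
      (by simp only [ne_eq, Prod.mk.injEq]; omega) (by simp only [Crosses]; omega)
  · by_cases h1 : p + 1 ≤ k + 5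
    · exact absurd (by simp only [Crosses]; omega) (h (0, p+1) (by rw [mem_Sd]; omega)
        (by simp only [ne_eq, Prod.mk.injEq]; omega))
    · by_cases h2 : p = k + 5
      · by_cases h3 : q = k + 7
        · exact absurd (by omega) hT
        · by_cases h4 : q = k + 8
          · exact ⟨h2, h4⟩
          · exact absurd (by simp only [Crosses]; omega) (h (0, k+8) (by rw [mem_Sd]; omega)
              (by simp only [ne_eq, Prod.mk.injEq]; omega))
      · by_cases h5 : p = k + 6
        · by_cases h6 : q = k + 8
          · exact absurd (by omega) hS
          · exact absurd (by simp only [Crosses]; omega) (h (0, k+8) (by rw [mem_Sd]; omega)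
              (by simp only [ne_eq, Prod.mk.injEq]; omega))
        · exact absurd (by simp only [Crosses]; omega) (h (0, p+1) (by rw [mem_Sd]; omega)
            (by simp only [ne_eq, Prod.mk.injEq]; omega))

lemma flipDist_eq {k n : ℕ} (hn : k + 7 ≤ n) :
    flipDist n (Sd k n) (Td k n) = k + 7 := by
  have hmem : (k + 7) ∈ {m | ∃ f, IsFlipPath n m f (Sd k n) (Td k n)} :=
    ⟨gpath k n, gpath_isFlipPath hn⟩
  refine le_antisymm (Nat.sInf_le hmem) (le_csInf ⟨k+7, hmem⟩ ?_)
  rintro m ⟨f, hf⟩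
  by_contra hlt
  push_neg at hlt
  have hge := path_ge_sdiff m f (Sd k n) hf
  rw [card_Sd_diff_Td hn] at hge
  have hm : m = k + 6 := by omega
  have h0 : FlipAdj n (Sd k n) (f 1) := by
    have := hf.2.2 0 (by omega); rwa [hf.1] at this
  have htail := path_tail hf 1 (by omega)
  have h1 := path_ge_sdiff _ _ _ htail
  obtain ⟨y, r, hyT, hyS, hrS, hV, hcr⟩ := strict_step h0
    (by rw [card_Sd_diff_Td hn]; omega)
  obtain ⟨p, q⟩ := y
  obtain ⟨e1, e2, he1, he2, hne, hc1, hc2⟩ := CF1 hn hyT hyS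
  by_cases hr1 : e1 = r
  · exact hcr e2 he2 (fun h => hne (hr1.trans h.symm)) hc2
  · exact hcr e1 he1 hr1 hc1

end St2

/-- For every `k ≥ 1` and `n ≥ k + 7` there are triangulations `S`, `T` of
size `n` such that every geodesic from `S` to `T` begins with a flip
increasing the number of conflicts with `T` by exactly `k`. -/
theorem stmt2 :
    ∀ k : ℕ, 1 ≤ k → ∀ n : ℕ, k + 7 ≤ n → ∃ S T : Finset (ℕ × ℕ),
      IsTriangulation n S ∧ IsTriangulation n T ∧
      ∀ (m : ℕ) (f : ℕ → Finset (ℕ × ℕ)), IsGeodesic n m f S T →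
        conflicts (f 1) T = conflicts S T + k := by
  intro k hk n hn
  refine ⟨St2.Sd k n, St2.Td k n, St2.isTri_Sd hn, St2.isTri_Td hn, ?_⟩
  intro m f hgeo
  obtain ⟨hf, hm⟩ := hgeo
  rw [St2.flipDist_eq hn] at hm
  subst hm
  -- step 0
  have h0 : FlipAdj n (St2.Sd k n) (f 1) := by
    have := hf.2.2 0 (by omega); rwa [hf.1] at this
  obtain ⟨s, x, hsS, hsf1, hxf1, hxS, hf1⟩ := St2.flip_decomp h0
  have hnc1 : ∀ e ∈ f 1, ∀ e' ∈ f 1, ¬ Crosses e e' := h0.2.1.2.2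
  -- x ∉ T
  have hxT : x ∉ St2.Td k n := by
    intro hxT
    obtain ⟨p, q⟩ := x
    obtain ⟨e1, e2, he1, he2, hne, hc1, hc2⟩ := St2.CF1 hn hxT hxS
    have k1 : e1 = s := by
      by_contra hne1
      exact hnc1 _ hxf1 e1
        (hf1 ▸ Finset.mem_insert_of_mem (Finset.mem_erase.2 ⟨hne1, he1⟩)) hc1
    have k2 : e2 = s := by
      by_contra hne2
      exact hnc1 _ hxf1 e2
        (hf1 ▸ Finset.mem_insert_of_mem (Finset.mem_erase.2 ⟨hne2, he2⟩)) hc2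
    exact hne (k1.trans k2.symm)
  -- bound on (f 1 \ T).card
  have hφ1le : ((f 1) \ St2.Td k n).card ≤ k + 6 := by
    have h := St2.path_ge_sdiff _ _ _ (St2.path_tail hf 1 (by omega))
    have : k + 7 - 1 = k + 6 := by omega
    rwa [this] at h
  -- s ∉ T
  have hsT : s ∉ St2.Td k n := by
    intro hsT
    have hsub : insert x (St2.Sd k n \ St2.Td k n) ⊆ (f 1) \ St2.Td k n := by
      intro a ha
      rcases Finset.mem_insert.1 ha with rfl | ha
      · exact Finset.mem_sdiff.2 ⟨hxf1, hxT⟩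
      · obtain ⟨h1, h2⟩ := Finset.mem_sdiff.1 ha
        have hane : a ≠ s := fun h => (h ▸ h2) hsT
        exact Finset.mem_sdiff.2
          ⟨hf1 ▸ Finset.mem_insert_of_mem (Finset.mem_erase.2 ⟨hane, h1⟩), h2⟩
    have hc := Finset.card_le_card hsub
    rw [Finset.card_insert_of_notMem (fun h => hxS (Finset.mem_sdiff.1 h).1),
      St2.card_Sd_diff_Td hn] at hc
    omega
  -- (f 1 \ T).card = k+6
  have hsST : s ∈ St2.Sd k n \ St2.Td k n := Finset.mem_sdiff.2 ⟨hsS, hsT⟩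
  have hφ1 : ((f 1) \ St2.Td k n).card = k + 6 := by
    refine le_antisymm hφ1le ?_
    have hsub : insert x ((St2.Sd k n \ St2.Td k n).erase s) ⊆ (f 1) \ St2.Td k n := by
      intro a ha
      rcases Finset.mem_insert.1 ha with rfl | ha
      · exact Finset.mem_sdiff.2 ⟨hxf1, hxT⟩
      · obtain ⟨hane, ha'⟩ := Finset.mem_erase.1 ha
        obtain ⟨h1, h2⟩ := Finset.mem_sdiff.1 ha'
        exact Finset.mem_sdiff.2
          ⟨hf1 ▸ Finset.mem_insert_of_mem (Finset.mem_erase.2 ⟨hane, h1⟩), h2⟩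
    have hc := Finset.card_le_card hsub
    rw [Finset.card_insert_of_notMem
        (fun h => hxS (Finset.mem_sdiff.1 (Finset.mem_of_mem_erase h)).1),
      Finset.card_erase_of_mem hsST, St2.card_Sd_diff_Td hn] at hc
    omega
  -- step 1 is strict
  have h1 : FlipAdj n (f 1) (f 2) := hf.2.2 1 (by omega)
  have hφ2le : ((f 2) \ St2.Td k n).card ≤ k + 5 := by
    have h := St2.path_ge_sdiff _ _ _ (St2.path_tail hf 2 (by omega))
    have : k + 7 - 2 = k + 5 := by omega
    rwa [this] at h
  obtain ⟨y, r, hyT, hyf1, hrf1, hf2, hycr⟩ := St2.strict_step (T := St2.Td k n) h1 (by omega)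
  have hyS : y ∉ St2.Sd k n := by
    intro hyS
    have : y ≠ s := fun h => hsT (h ▸ hyT)
    exact hyf1 (hf1 ▸ Finset.mem_insert_of_mem (Finset.mem_erase.2 ⟨this, hyS⟩))
  have hcross : ∀ e ∈ St2.Sd k n, Crosses y e → e = s ∨ e = r := by
    intro e heS hc
    by_cases hes : e = s
    · exact Or.inl hes
    right; by_contra her
    exact hycr e (hf1 ▸ Finset.mem_insert_of_mem (Finset.mem_erase.2 ⟨hes, heS⟩)) her hc
  obtain ⟨py, qy⟩ := y
  obtain ⟨hy5, hy7⟩ := St2.CF2 hn hyT hyS hcross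
  subst hy5; subst hy7
  have hm1 : ((0:ℕ), k+6) = s ∨ ((0:ℕ), k+6) = r :=
    hcross (0, k+6) (by rw [St2.mem_Sd]; omega) (by simp only [Crosses]; omega)
  have hm2 : ((k+6:ℕ), k+8) = s ∨ ((k+6:ℕ), k+8) = r :=
    hcross (k+6, k+8) (by rw [St2.mem_Sd]; omega) (by simp only [Crosses]; omega)
  have hsr : s ≠ r := fun h => hsf1 (h ▸ hrf1)
  have hxd : IsDiagonal n x := h0.2.1.2.1 x hxf1
  rcases hm1 with hm1 | hm1 <;> rcases hm2 with hm2 | hm2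
  · exact absurd (hm1.trans hm2.symm) (by simp only [ne_eq, Prod.mk.injEq]; omega)
  ·
    -- CASE B
    exfalso
    subst hm1; subst hm2
    have hxcr : ∀ e ∈ St2.Sd k n, e ≠ (0, k+6) → ¬ Crosses x e := by
      intro e heS hne
      exact hnc1 x hxf1 e
        (hf1 ▸ Finset.mem_insert_of_mem (Finset.mem_erase.2 ⟨hne, heS⟩))
    obtain ⟨px, qx⟩ := x
    obtain ⟨hx5, hx8⟩ := St2.CF4 hn hxd hxS hxT hxcr
    subst hx5; subst hx8
    -- step 2 strict
    have h2 : FlipAdj n (f 2) (f 3) := hf.2.2 2 (by omega)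
    have hφ2 : ((f 2) \ St2.Td k n).card = k + 5 := by
      refine le_antisymm hφ2le ?_
      have hsub : ((f 1) \ St2.Td k n).erase (k+6, k+8) ⊆ (f 2) \ St2.Td k n := by
        intro a ha
        obtain ⟨hane, ha'⟩ := Finset.mem_erase.1 ha
        obtain ⟨ha1, ha2⟩ := Finset.mem_sdiff.1 ha'
        refine Finset.mem_sdiff.2 ⟨?_, ha2⟩
        exact hf2 ▸ Finset.mem_insert_of_mem (Finset.mem_erase.2 ⟨hane, ha1⟩)
      have hc := Finset.card_le_card hsub
      rw [Finset.card_erase_of_mem (Finset.mem_sdiff.2 ⟨hrf1,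
        by rw [St2.mem_Td]; omega⟩), hφ1] at hc
      omega
    have hφ3le : ((f 3) \ St2.Td k n).card ≤ k + 4 := by
      have h := St2.path_ge_sdiff _ _ _ (St2.path_tail hf 3 (by omega))
      have : k + 7 - 3 = k + 4 := by omega
      rwa [this] at h
    obtain ⟨z, r2, hzT, hzf2, hr2f2, hf3, hzcr⟩ := St2.strict_step (T := St2.Td k n) h2 (by omega)
    -- z ∉ S
    have hzS : z ∉ St2.Sd k n := by
      intro hzS
      have hz1 : z ∈ f 1 := by
        have : z ≠ (0, k+6) := fun h => hsT (h ▸ hzT)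
        exact hf1 ▸ Finset.mem_insert_of_mem (Finset.mem_erase.2 ⟨this, hzS⟩)
      have hz2 : z ∈ f 2 := by
        have hnotT : ((k+6:ℕ), k+8) ∉ St2.Td k n := by
          rw [St2.mem_Td]; omega
        have : z ≠ (k+6, k+8) := fun h => hnotT (h ▸ hzT)
        exact hf2 ▸ Finset.mem_insert_of_mem (Finset.mem_erase.2 ⟨this, hz1⟩)
      exact hzf2 hz2
    have hzy : z ≠ (k+5, k+7) := by
      intro h
      exact hzf2 (hf2 ▸ h ▸ Finset.mem_insert_self _ _)
    -- membership helper for f 2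
    have hmemf2 : ∀ e, e ∈ St2.Sd k n → e ≠ (0, k+6) → e ≠ (k+6, k+8) → e ∈ f 2 := by
      intro e he h1' h2'
      exact hf2 ▸ Finset.mem_insert_of_mem (Finset.mem_erase.2
        ⟨h2', hf1 ▸ Finset.mem_insert_of_mem (Finset.mem_erase.2 ⟨h1', he⟩)⟩)
    have hxf2 : ((k+5:ℕ), k+8) ∈ f 2 := by
      refine hf2 ▸ Finset.mem_insert_of_mem (Finset.mem_erase.2 ⟨?_, hxf1⟩)
      simp only [ne_eq, Prod.mk.injEq]; omega
    obtain ⟨pz, qz⟩ := z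
    have hzT' := hzT; rw [St2.mem_Td] at hzT'
    have hzS' := hzS; rw [St2.mem_Sd] at hzS'
    rcases hzT' with ⟨hz1, hz2, hz3⟩ | ⟨hz1, hz2, hz3⟩ | hpad
    · -- z = (pz, k+8), 1 ≤ pz ≤ k+3
      have q1 : ((0:ℕ), pz+1) = r2 := by
        by_contra hq
        exact hzcr (0, pz+1) (hmemf2 _ (by rw [St2.mem_Sd]; omega)
          (by simp only [ne_eq, Prod.mk.injEq]; omega)
          (by simp only [ne_eq, Prod.mk.injEq]; omega)) hq (by simp only [Crosses]; omega)
      have q2 : ((0:ℕ), pz+2) = r2 := by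
        by_contra hq
        exact hzcr (0, pz+2) (hmemf2 _ (by rw [St2.mem_Sd]; omega)
          (by simp only [ne_eq, Prod.mk.injEq]; omega)
          (by simp only [ne_eq, Prod.mk.injEq]; omega)) hq (by simp only [Crosses]; omega)
      have := q1.trans q2.symm
      simp only [Prod.mk.injEq] at this
      omega
    · -- z = (pz, k+7), k+3 ≤ pz ≤ k+4 (since z ≠ (k+5,k+7))
      have hpz : pz ≤ k + 4 := by
        rcases Nat.lt_or_ge pz (k+5) with h | h
        · omega
        · exact absurd (by simp only [Prod.mk.injEq]; omega) hzy
      have q1 : ((0:ℕ), pz+1) = r2 := by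
        by_contra hq
        exact hzcr (0, pz+1) (hmemf2 _ (by rw [St2.mem_Sd]; omega)
          (by simp only [ne_eq, Prod.mk.injEq]; omega)
          (by simp only [ne_eq, Prod.mk.injEq]; omega)) hq (by simp only [Crosses]; omega)
      have q2 : ((k+5:ℕ), k+8) = r2 := by
        by_contra hq
        exact hzcr (k+5, k+8) hxf2 hq (by simp only [Crosses]; omega)
      have := q1.trans q2.symm
      simp only [Prod.mk.injEq] at this
      omega
    · exact absurd (Or.inr (Or.inr hpad)) hzS'
  · -- hm1 : (0,k+6) = r, hm2 : (k+6,k+8) = s : CASE A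
    subst hm2
    have hxcr : ∀ e ∈ St2.Sd k n, e ≠ (k+6, k+8) → ¬ Crosses x e := by
      intro e heS hne
      exact hnc1 x hxf1 e
        (hf1 ▸ Finset.mem_insert_of_mem (Finset.mem_erase.2 ⟨hne, heS⟩))
    obtain ⟨px, qx⟩ := x
    obtain ⟨hx0, hx7⟩ := St2.CF3 hn hxd hxS hxT hxcr
    subst hx0; subst hx7
    rw [hf1]
    have key := St2.conflicts_insert_erase (T := St2.Td k n) hsS hxS
    rw [St2.cross_x hn, St2.cross_s hn] at key
    omega
  · -- both = r : contradiction
    exact absurd (hm1.trans hm2.symm) (by simp only [ne_eq, Prod.mk.injEq]; omega)
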